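/- Let a and b be positive integers and let μ ∈ R(a,b) have frontier w_1 w_2…w_{a+b} with levels l_0, l_1, …, l_{a+b}. Then h⁺_{b,a}(μ) equals the number of pairs (i,j) with 1 ≤ i < j ≤ a+b, w_i = E, w_j = N, and 1 ≤ l_{i−1} − l_{j−1} ≤ a+b. -/

import Mathlib

/-- `μ : ℕ → ℕ` represents a partition in `R(a,b)`: the value `μ i` is the
`(i+1)`-th part; the parts are weakly decreasing, at most `b`, and zero from
index `a` on (so the Young diagram of `μ` fits in an `a × b` box). -/
def InBox (a b : ℕ) (μ : ℕ → ℕ) : Prop :=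
  (∀ i j : ℕ, i ≤ j → μ j ≤ μ i) ∧ μ 0 ≤ b ∧ ∀ i, a ≤ i → μ i = 0

/-- `μ ∈ D(a,b)`: `μ ∈ R(a,b)` and `a·μ_j ≤ b·(a−j)` for all (1-indexed) `j`;
in terms of the 0-indexed parts this reads `a·μ(i) ≤ b·(a−1−i)`. -/
def InTriangle (a b : ℕ) (μ : ℕ → ℕ) : Prop :=
  InBox a b μ ∧ ∀ i, i < a → a * μ i ≤ b * (a - 1 - i)

/-- The leg of the cell in (0-indexed) row `i`, column `j` of the Young diagram
of `μ`: the number of cells strictly below it in its column. -/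
noncomputable def leg (μ : ℕ → ℕ) (i j : ℕ) : ℕ :=
  {i' : ℕ | i < i' ∧ j < μ i'}.ncard

/-- The arm of the cell in row `i`, column `j` (as an integer): the number of
cells strictly to its right in its row. -/
def armZ (μ : ℕ → ℕ) (i j : ℕ) : ℤ := (μ i : ℤ) - 1 - j

/-- `h⁺_{b,a}(μ)`: the number of cells `c` of `μ` with
`−a < a·arm(c) − b·leg(c) ≤ b`. -/
noncomputable def hplus (a b : ℕ) (μ : ℕ → ℕ) : ℕ :=
  {c : ℕ × ℕ | c.2 < μ c.1 ∧
    -(a : ℤ) < (a : ℤ) * armZ μ c.1 c.2 - (b : ℤ) * leg μ c.1 c.2 ∧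
    (a : ℤ) * armZ μ c.1 c.2 - (b : ℤ) * leg μ c.1 c.2 ≤ (b : ℤ)}.ncard

/-- The frontier of `μ ∈ R(a,b)`: the lattice word from `(0,0)` to `(b,a)`
(`true` = N, `false` = E) tracing the boundary of the diagram of `μ` inside the
`a × b` box; its `j`-th N (from the start) is preceded by exactly `μ_{a+1−j}` E's. -/
def frontierWord (a b : ℕ) (μ : ℕ → ℕ) : List Bool :=
  ((List.range a).flatMap fun y =>
    List.replicate (μ (a - 1 - y) - μ (a - y)) false ++ [true]) ++
  List.replicate (b - μ 0) false

/-- The level `l_i = b·(#N) − a·(#E)` of the lattice point reached after the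
first `i` steps of the word `w` (with `true` = N, `false` = E). -/
def levelAt (a b : ℕ) (w : List Bool) (i : ℕ) : ℤ :=
  (b : ℤ) * (w.take i).count true - (a : ℤ) * (w.take i).count false

/-- `ml_{b,a}`: the minimum of the levels `l_0, l_1, …, l_{length w}` along `w`. -/
def minLevel (a b : ℕ) (w : List Bool) : ℤ :=
  ((Finset.range (w.length + 1)).image fun i => levelAt a b w i).min'
    (Finset.Nonempty.image ⟨0, Finset.mem_range.mpr (Nat.zero_lt_succ _)⟩ _)


namespace Stmt9Aux

def blocks (a : ℕ) (μ : ℕ → ℕ) : List Bool :=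
  (List.range a).flatMap fun y => List.replicate (μ (a - 1 - y) - μ (a - y)) false ++ [true]

lemma rep_true (n q : ℕ) :
    ((List.replicate n false ++ [true]) : List Bool)[q]? = some true ↔ q = n := by
  rcases lt_trichotomy q n with h | h | h
  · rw [List.getElem?_append_left (by simpa using h)]
    simp [List.getElem?_replicate, h]
    omega
  · subst h
    rw [List.getElem?_append_right (by simp)]
    simp
  · rw [List.getElem?_append_right (by simp; omega)]
    rw [List.getElem?_eq_none (by simp; omega)]
    simp
    omega

lemma blocks_succ (a : ℕ) (μ : ℕ → ℕ) :
    blocks (a + 1) μ =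
      blocks a (fun i => μ (i + 1)) ++ (List.replicate (μ 0 - μ 1) false ++ [true]) := by
  unfold blocks
  rw [List.range_succ, List.flatMap_append]
  simp only [List.flatMap_cons, List.flatMap_nil, List.append_nil]
  congr 1
  · apply List.flatMap_congr
    intro y hy
    simp only [List.mem_range] at hy
    have h1 : a + 1 - 1 - y = (a - 1 - y) + 1 := by omega
    have h2 : a + 1 - y = (a - y) + 1 := by omega
    rw [h1, h2]
  · have h1 : a + 1 - 1 - a = 0 := by omega
    have h2 : a + 1 - a = 1 := by omega
    rw [h1, h2]

lemma blocks_spec (a : ℕ) (μ : ℕ → ℕ) (hmono : ∀ i j : ℕ, i ≤ j → μ j ≤ μ i) :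
    (blocks a μ).length = (μ 0 - μ a) + a ∧
    ∀ p : ℕ, ((blocks a μ)[p]? = some true ↔ ∃ y < a, p = (μ (a - 1 - y) - μ a) + y) := by
  induction a generalizing μ with
  | zero => simp [blocks]
  | succ a ih =>
    obtain ⟨ihlen, ihget⟩ := ih (fun i => μ (i + 1)) (fun i j h => hmono _ _ (by omega))
    norm_num at ihlen ihget
    have hm1 : μ 1 ≤ μ 0 := hmono 0 1 (by omega)
    have hma : μ (a + 1) ≤ μ 1 := hmono 1 (a + 1) (by omega)
    have hma0 : μ (a + 1) ≤ μ 0 := le_trans hma hm1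
    rw [blocks_succ]
    constructor
    · simp only [List.length_append, ihlen, List.length_replicate, List.length_cons,
        List.length_nil]
      omega
    · intro p
      by_cases hp : p < (μ 1 - μ (a + 1)) + a
      · rw [List.getElem?_append_left (by rw [ihlen]; exact hp)]
        rw [ihget p]
        constructor
        · rintro ⟨y, hy, rfl⟩
          refine ⟨y, by omega, ?_⟩
          have : a + 1 - 1 - y = (a - 1 - y) + 1 := by omega
          rw [this]
        · rintro ⟨y, hy, rfl⟩
          rcases Nat.lt_or_ge y a with hya | hya
          · refine ⟨y, hya, ?_⟩
            have : a + 1 - 1 - y = (a - 1 - y) + 1 := by omega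
            rw [this]
          · exfalso
            have hidx : a + 1 - 1 - y = 0 := by omega
            rw [hidx] at hp
            omega
      · rw [List.getElem?_append_right (by rw [ihlen]; omega)]
        rw [ihlen, rep_true]
        constructor
        · intro h
          refine ⟨a, by omega, ?_⟩
          have : a + 1 - 1 - a = 0 := by omega
          rw [this]
          omega
        · rintro ⟨y, hy, rfl⟩
          rcases Nat.lt_or_ge y a with hya | hya
          · exfalso
            have h1 : μ (a + 1 - 1 - y) ≤ μ 1 := hmono 1 _ (by omega)
            have h2 : μ (a + 1 - 1 - y) - μ (a + 1) ≤ μ 1 - μ (a + 1) :=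
              Nat.sub_le_sub_right h1 _
            omega
          · have hya' : y = a := by omega
            have hidx : a + 1 - 1 - y = 0 := by omega
            rw [hidx]
            omega

section Chunk2

variable {a b : ℕ} {μ : ℕ → ℕ}

lemma frontier_eq : frontierWord a b μ = Stmt9Aux.blocks a μ ++ List.replicate (b - μ 0) false :=
  rfl

variable (hμ : InBox a b μ) (ha : 0 < a) (hb : 0 < b)
include hμ

lemma W_length : (frontierWord a b μ).length = a + b := by
  obtain ⟨hmono, hb0, hz⟩ := hμ
  rw [frontier_eq, List.length_append, (Stmt9Aux.blocks_spec a μ hmono).1, hz a le_rfl,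
    List.length_replicate]
  omega

lemma W_true_iff (p : ℕ) :
    (frontierWord a b μ)[p]? = some true ↔ ∃ r < a, p = μ r + (a - 1 - r) := by
  obtain ⟨hmono, hb0, hz⟩ := hμ
  obtain ⟨hlen, hget⟩ := Stmt9Aux.blocks_spec a μ hmono
  rw [hz a le_rfl] at hlen hget
  simp only [Nat.sub_zero] at hlen hget
  have key : ∀ q, (∃ y < a, q = μ (a - 1 - y) + y) ↔ ∃ r < a, q = μ r + (a - 1 - r) := by
    intro q
    constructor
    · rintro ⟨y, hy, rfl⟩
      refine ⟨a - 1 - y, by omega, ?_⟩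
      have : a - 1 - (a - 1 - y) = y := by omega
      rw [this]
    · rintro ⟨r, hr, rfl⟩
      refine ⟨a - 1 - r, by omega, ?_⟩
      have : a - 1 - (a - 1 - r) = r := by omega
      rw [this]
  rw [frontier_eq]
  by_cases hp : p < μ 0 + a
  · rw [List.getElem?_append_left (by rw [hlen]; exact hp), hget, key]
  · constructor
    · intro h
      exfalso
      rw [List.getElem?_append_right (by rw [hlen]; omega)] at h
      rw [List.getElem?_replicate] at h
      by_cases h2 : p - (Stmt9Aux.blocks a μ).length < b - μ 0 <;> simp [h2] at h
    · rintro ⟨r, hr, rfl⟩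
      exfalso
      have : μ r ≤ μ 0 := hmono 0 r (by omega)
      omega

lemma W_false_iff (p : ℕ) :
    (frontierWord a b μ)[p]? = some false ↔
      p < a + b ∧ ¬∃ r < a, p = μ r + (a - 1 - r) := by
  constructor
  · intro h
    have hlt : p < (frontierWord a b μ).length :=
      (List.getElem?_eq_some_iff.mp h).1
    refine ⟨by rwa [W_length hμ] at hlt, ?_⟩
    intro hex
    rw [← W_true_iff hμ] at hex
    rw [h] at hex
    simp at hex
  · rintro ⟨hp, hex⟩
    have hlt : p < (frontierWord a b μ).length := by rwa [W_length hμ]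
    rcases Bool.eq_false_or_eq_true (frontierWord a b μ)[p] with h | h
    · exfalso
      apply hex
      rw [← W_true_iff hμ (p := p), List.getElem?_eq_getElem hlt, h]
    · rw [List.getElem?_eq_getElem hlt, h]

end Chunk2

section Chunk3

variable {a b : ℕ} {μ : ℕ → ℕ}

/-- number of N-steps among the first `k` steps -/
def tcount (a : ℕ) (μ : ℕ → ℕ) (k : ℕ) : ℕ :=
  ((Finset.range a).filter (fun r => μ r + (a - 1 - r) < k)).card

def qcol (a : ℕ) (μ : ℕ → ℕ) (c : ℕ) : ℕ :=
  ((Finset.range a).filter (fun r => c < μ r)).card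

def ePos (a : ℕ) (μ : ℕ → ℕ) (c : ℕ) : ℕ := c + (a - qcol a μ c)

variable (hμ : InBox a b μ)
include hμ

lemma nrow_anti {r1 r2 : ℕ} (h : r1 < r2) (h2 : r2 < a) :
    μ r2 + (a - 1 - r2) < μ r1 + (a - 1 - r1) := by
  have := hμ.1 r1 r2 (le_of_lt h)
  omega

lemma nrow_inj {r1 r2 : ℕ} (h1 : r1 < a) (h2 : r2 < a)
    (h : μ r1 + (a - 1 - r1) = μ r2 + (a - 1 - r2)) : r1 = r2 := by
  rcases lt_trichotomy r1 r2 with hlt | heq | hgt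
  · exact absurd h (Nat.ne_of_gt (nrow_anti hμ hlt h2))
  · exact heq
  · exact absurd h (Nat.ne_of_lt (nrow_anti hμ hgt h1))

lemma count_take (k : ℕ) (hk : k ≤ a + b) :
    ((frontierWord a b μ).take k).count true = tcount a μ k ∧
    ((frontierWord a b μ).take k).count false = k - tcount a μ k := by
  induction k with
  | zero =>
    simp [tcount]
  | succ k ih =>
    obtain ⟨iht, ihf⟩ := ih (by omega)
    have hlt : k < (frontierWord a b μ).length := by rw [W_length hμ]; omega
    have htake : (frontierWord a b μ).take (k + 1) =
        (frontierWord a b μ).take k ++ [(frontierWord a b μ)[k]] := by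
      rw [List.take_succ, List.getElem?_eq_getElem hlt]
      rfl
    have hsplit : tcount a μ (k + 1) = tcount a μ k +
        ((Finset.range a).filter (fun r => μ r + (a - 1 - r) = k)).card := by
      unfold tcount
      rw [← Finset.card_union_of_disjoint (by
        simp only [Finset.disjoint_filter]
        intro x _ hx1 hx2
        omega)]
      congr 1
      ext x
      simp only [Finset.mem_union, Finset.mem_filter, Finset.mem_range]
      constructor
      · rintro ⟨hx, hlt'⟩
        rcases Nat.lt_or_ge (μ x + (a - 1 - x)) k with h | h
        · exact Or.inl ⟨hx, h⟩
        · exact Or.inr ⟨hx, by omega⟩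
      · rintro (⟨hx, h⟩ | ⟨hx, h⟩) <;> exact ⟨hx, by omega⟩
    have htk : tcount a μ k ≤ k := by
      rw [← iht]
      calc ((frontierWord a b μ).take k).count true ≤ ((frontierWord a b μ).take k).length :=
        List.count_le_length
      _ ≤ k := by simp
    rcases Bool.eq_false_or_eq_true (frontierWord a b μ)[k] with hx | hx
    · -- true case: there is a row with nrow = k
      have hex : ∃ r < a, k = μ r + (a - 1 - r) := by
        rw [← W_true_iff hμ, List.getElem?_eq_getElem hlt, hx]
      obtain ⟨r0, hr0, hr0e⟩ := hex
      have hcard1 : ((Finset.range a).filter (fun r => μ r + (a - 1 - r) = k)).card = 1 := by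
        rw [Finset.card_eq_one]
        refine ⟨r0, ?_⟩
        ext x
        simp only [Finset.mem_filter, Finset.mem_range, Finset.mem_singleton]
        constructor
        · rintro ⟨hx1, hx2⟩
          exact nrow_inj hμ hx1 hr0 (by omega)
        · rintro rfl
          exact ⟨hr0, by omega⟩
      rw [htake, List.count_append, List.count_append, hx, iht, ihf, hsplit, hcard1]
      constructor <;> simp <;> omega
    · have hex : ¬∃ r < a, k = μ r + (a - 1 - r) := by
        have := (W_false_iff hμ k).mp (by rw [List.getElem?_eq_getElem hlt, hx])
        exact this.2
      have hcard0 : ((Finset.range a).filter (fun r => μ r + (a - 1 - r) = k)).card = 0 := by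
        rw [Finset.card_eq_zero, Finset.filter_eq_empty_iff]
        intro x hx'
        simp only [Finset.mem_range] at hx'
        intro hc
        exact hex ⟨x, hx', hc.symm⟩
      rw [htake, List.count_append, List.count_append, hx, iht, ihf, hsplit, hcard0]
      constructor <;> simp <;> omega

omit hμ in
lemma qcol_le (c : ℕ) : qcol a μ c ≤ a := by
  calc qcol a μ c ≤ (Finset.range a).card := Finset.card_filter_le _ _
  _ = a := Finset.card_range a

lemma claim1 {r c : ℕ} (hr : r < a) (hc : μ r ≤ c) :
    μ r + (a - 1 - r) < ePos a μ c := by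
  have hq : qcol a μ c ≤ r := by
    unfold qcol
    calc ((Finset.range a).filter (fun r' => c < μ r')).card
        ≤ (Finset.range r).card := by
          apply Finset.card_le_card
          intro x
          simp only [Finset.mem_filter, Finset.mem_range]
          rintro ⟨_, hx2⟩
          by_contra hxr
          have : μ x ≤ μ r := hμ.1 r x (by omega)
          omega
      _ = r := Finset.card_range r
  unfold ePos
  omega

lemma claim2 {r c : ℕ} (hr : r < a) (hc : c < μ r) :
    ePos a μ c < μ r + (a - 1 - r) := by
  have hq : r + 1 ≤ qcol a μ c := by
    unfold qcol
    calc r + 1 = (Finset.range (r + 1)).card := (Finset.card_range _).symm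
      _ ≤ ((Finset.range a).filter (fun r' => c < μ r')).card := by
          apply Finset.card_le_card
          intro x
          simp only [Finset.mem_range, Finset.mem_filter]
          intro hx
          have : μ r ≤ μ x := hμ.1 x r (by omega)
          exact ⟨by omega, by omega⟩
  have := qcol_le (a := a) (μ := μ) c
  unfold ePos
  omega

end Chunk3

section Chunk4

variable {a b : ℕ} {μ : ℕ → ℕ}

variable (hμ : InBox a b μ)
include hμ

lemma ePos_false {c : ℕ} (hc : c < b) :
    (frontierWord a b μ)[ePos a μ c]? = some false := by
  rw [W_false_iff hμ]
  have hq := qcol_le (a := a) (μ := μ) c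
  constructor
  · unfold ePos
    omega
  · rintro ⟨r, hr, hre⟩
    rcases Nat.lt_or_ge c (μ r) with h | h
    · have := claim2 hμ hr h
      omega
    · have := claim1 hμ hr h
      omega

lemma ePos_lt (c : ℕ) (hc : c < b) : ePos a μ c < a + b := by
  have hq := qcol_le (a := a) (μ := μ) c
  unfold ePos
  omega

lemma tcount_ePos {c : ℕ} (hc : c < b) :
    tcount a μ (ePos a μ c) = a - qcol a μ c := by
  unfold tcount
  have h1 : (Finset.range a).filter (fun r => μ r + (a - 1 - r) < ePos a μ c) =
      (Finset.range a).filter (fun r => ¬ c < μ r) := by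
    apply Finset.filter_congr
    intro r hr
    simp only [Finset.mem_range] at hr
    simp only [not_lt, eq_iff_iff]
    constructor
    · intro h
      by_contra h2
      have := claim2 hμ (c := c) hr (by omega)
      omega
    · intro h
      exact claim1 hμ hr h
  rw [h1]
  have := Finset.card_filter_add_card_filter_not (s := Finset.range a)
    (p := fun r => c < μ r)
  rw [Finset.card_range] at this
  unfold qcol
  omega

lemma tcount_nrow {r : ℕ} (hr : r < a) :
    tcount a μ (μ r + (a - 1 - r)) = a - 1 - r := by
  unfold tcount
  have h1 : (Finset.range a).filter (fun r' => μ r' + (a - 1 - r') < μ r + (a - 1 - r)) =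
      (Finset.range a).filter (fun r' => r < r') := by
    apply Finset.filter_congr
    intro x hx
    simp only [Finset.mem_range] at hx
    try simp only [eq_iff_iff]
    constructor
    · intro h
      by_contra h2
      rcases Nat.lt_or_ge x r with h3 | h3
      · have := nrow_anti hμ (r1 := x) (r2 := r) h3 hr
        omega
      · have hxr : x = r := by omega
        rw [hxr] at h
        omega
    · intro h
      exact nrow_anti hμ h hx
  rw [h1]
  have h2 : (Finset.range a).filter (fun r' => r < r') = Finset.Ioo r a := by
    ext x
    simp [Finset.mem_Ioo, and_comm]
  rw [h2, Nat.card_Ioo]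
  omega

lemma level_ePos {c : ℕ} (hc : c < b) :
    levelAt a b (frontierWord a b μ) (ePos a μ c) =
      (b : ℤ) * ((a : ℤ) - qcol a μ c) - (a : ℤ) * c := by
  have hq := qcol_le (a := a) (μ := μ) c
  have hlt := ePos_lt hμ c hc
  obtain ⟨ht, hf⟩ := count_take hμ (ePos a μ c) (by omega)
  unfold levelAt
  rw [ht, hf, tcount_ePos hμ hc]
  have h1 : ((a - qcol a μ c : ℕ) : ℤ) = (a : ℤ) - qcol a μ c := by omega
  have h2 : ((ePos a μ c - (a - qcol a μ c) : ℕ) : ℤ) = (c : ℤ) := by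
    have : ePos a μ c = c + (a - qcol a μ c) := rfl
    omega
  rw [h1, h2]

lemma level_nrow {r : ℕ} (hr : r < a) :
    levelAt a b (frontierWord a b μ) (μ r + (a - 1 - r)) =
      (b : ℤ) * ((a : ℤ) - 1 - r) - (a : ℤ) * μ r := by
  have hmr : μ r ≤ b := le_trans (hμ.1 0 r (by omega)) hμ.2.1
  obtain ⟨ht, hf⟩ := count_take hμ (μ r + (a - 1 - r)) (by omega)
  unfold levelAt
  rw [ht, hf, tcount_nrow hμ hr]
  have h1 : ((a - 1 - r : ℕ) : ℤ) = (a : ℤ) - 1 - r := by omega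
  have h2 : ((μ r + (a - 1 - r) - (a - 1 - r) : ℕ) : ℤ) = (μ r : ℤ) := by omega
  rw [h1, h2]

lemma leg_eq {r c : ℕ} (hr : r < a) (hc : c < μ r) :
    leg μ r c = qcol a μ c - (r + 1) ∧ r + 1 ≤ qcol a μ c := by
  have hset : {i' : ℕ | r < i' ∧ c < μ i'} =
      ↑((Finset.range a).filter (fun i' => r < i' ∧ c < μ i')) := by
    ext x
    simp only [Set.mem_setOf_eq, Finset.coe_filter, Finset.mem_range, Set.mem_setOf_eq]
    constructor
    · rintro ⟨h1, h2⟩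
      refine ⟨?_, h1, h2⟩
      by_contra hx
      have := hμ.2.2 x (by omega)
      omega
    · tauto
  have hleg : leg μ r c = ((Finset.range a).filter (fun i' => r < i' ∧ c < μ i')).card := by
    rw [leg, hset, Set.ncard_coe_finset]
  have hsplit := Finset.card_filter_add_card_filter_not
    (s := (Finset.range a).filter (fun r' => c < μ r')) (p := fun x => x ≤ r)
  have hle : ((Finset.range a).filter (fun r' => c < μ r')).filter (fun x => x ≤ r) =
      Finset.range (r + 1) := by
    ext x
    simp only [Finset.mem_filter, Finset.mem_range]
    constructor
    · rintro ⟨⟨_, _⟩, h⟩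
      omega
    · intro h
      have : μ r ≤ μ x := hμ.1 x r (by omega)
      exact ⟨⟨by omega, by omega⟩, by omega⟩
  have hgt : ((Finset.range a).filter (fun r' => c < μ r')).filter (fun x => ¬ x ≤ r) =
      (Finset.range a).filter (fun i' => r < i' ∧ c < μ i') := by
    ext x
    simp only [Finset.mem_filter, not_le]
    tauto
  rw [hle, hgt, Finset.card_range] at hsplit
  unfold qcol
  omega

end Chunk4

section Chunk5

variable {a b : ℕ} {μ : ℕ → ℕ}

lemma ePos_mono {c1 c2 : ℕ} (h : c1 < c2) : ePos a μ c1 < ePos a μ c2 := by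
  have hq : qcol a μ c2 ≤ qcol a μ c1 := by
    apply Finset.card_le_card
    intro x
    simp only [Finset.mem_filter, Finset.mem_range]
    rintro ⟨h1, h2⟩
    exact ⟨h1, by omega⟩
  have h1 := qcol_le (a := a) (μ := μ) c1
  have h2 := qcol_le (a := a) (μ := μ) c2
  unfold ePos
  omega

variable (hμ : InBox a b μ)
include hμ

lemma cover {p : ℕ} (hp : p < a + b) (hnot : ¬∃ r < a, p = μ r + (a - 1 - r)) :
    ∃ c < b, p = ePos a μ c := by
  classical
  set N := (Finset.range a).image (fun r => μ r + (a - 1 - r)) with hN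
  set E := (Finset.range b).image (fun c => ePos a μ c) with hE
  have hNcard : N.card = a := by
    rw [hN, Finset.card_image_of_injOn, Finset.card_range]
    intro x hx y hy hxy
    simp only [Finset.coe_range, Set.mem_Iio] at hx hy
    exact nrow_inj hμ hx hy hxy
  have hEcard : E.card = b := by
    rw [hE, Finset.card_image_of_injOn, Finset.card_range]
    intro x hx y hy hxy
    rcases lt_trichotomy x y with h | h | h
    · exact absurd hxy (Nat.ne_of_lt (ePos_mono h))
    · exact h
    · exact absurd hxy (Nat.ne_of_gt (ePos_mono h))
  have hdisj : Disjoint N E := by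
    rw [Finset.disjoint_left]
    rintro x hxN hxE
    rw [hN, Finset.mem_image] at hxN
    rw [hE, Finset.mem_image] at hxE
    obtain ⟨r, hr, hre⟩ := hxN
    obtain ⟨c, hc, hce⟩ := hxE
    simp only [Finset.mem_range] at hr hc
    rcases Nat.lt_or_ge c (μ r) with h | h
    · have := claim2 hμ hr h
      omega
    · have := claim1 hμ hr h
      omega
  have hsub : N ∪ E ⊆ Finset.range (a + b) := by
    intro x
    simp only [Finset.mem_union, hN, hE, Finset.mem_image, Finset.mem_range]
    rintro (⟨r, hr, rfl⟩ | ⟨c, hc, rfl⟩)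
    · have h1 : μ r ≤ μ 0 := hμ.1 0 r (by omega)
      have h2 : μ 0 ≤ b := hμ.2.1
      omega
    · exact ePos_lt hμ c hc
  have heq : N ∪ E = Finset.range (a + b) := by
    apply Finset.eq_of_subset_of_card_le hsub
    rw [Finset.card_range, Finset.card_union_of_disjoint hdisj, hNcard, hEcard]
  have hpmem : p ∈ N ∪ E := by rw [heq]; exact Finset.mem_range.mpr hp
  rcases Finset.mem_union.mp hpmem with hmem | hmem
  · exfalso
    rw [hN, Finset.mem_image] at hmem
    obtain ⟨r, hr, hre⟩ := hmem
    simp only [Finset.mem_range] at hr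
    exact hnot ⟨r, hr, hre.symm⟩
  · rw [hE, Finset.mem_image] at hmem
    obtain ⟨c, hc, hce⟩ := hmem
    simp only [Finset.mem_range] at hc
    exact ⟨c, hc, hce.symm⟩

lemma cond_iff {r c : ℕ} (hr : r < a) (hc : c < μ r) (hcb : c < b) :
    (1 ≤ levelAt a b (frontierWord a b μ) (ePos a μ c) -
          levelAt a b (frontierWord a b μ) (μ r + (a - 1 - r)) ∧
      levelAt a b (frontierWord a b μ) (ePos a μ c) -
          levelAt a b (frontierWord a b μ) (μ r + (a - 1 - r)) ≤ (a : ℤ) + b) ↔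
    (-(a : ℤ) < (a : ℤ) * armZ μ r c - (b : ℤ) * leg μ r c ∧
      (a : ℤ) * armZ μ r c - (b : ℤ) * leg μ r c ≤ (b : ℤ)) := by
  obtain ⟨hleg, hqr⟩ := leg_eq hμ hr hc
  have hqa := qcol_le (a := a) (μ := μ) c
  rw [level_ePos hμ hcb, level_nrow hμ hr]
  have hD : (b : ℤ) * ((a : ℤ) - qcol a μ c) - (a : ℤ) * c -
      ((b : ℤ) * ((a : ℤ) - 1 - r) - (a : ℤ) * μ r) =
      ((a : ℤ) * armZ μ r c - (b : ℤ) * leg μ r c) + a := by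
    rw [armZ]
    have hlegz : (leg μ r c : ℤ) = (qcol a μ c : ℤ) - (r + 1) := by omega
    rw [hlegz]
    ring
  rw [hD]
  omega

end Chunk5

end Stmt9Aux

open Stmt9Aux

/-- for `μ ∈ R(a,b)` with frontier `w_1 ⋯ w_{a+b}` and levels
`l_0, …, l_{a+b}`, the statistic `h⁺_{b,a}(μ)` equals the number of pairs
`(i, j)` with `1 ≤ i < j ≤ a+b`, `w_i = E`, `w_j = N` and
`1 ≤ l_{i−1} − l_{j−1} ≤ a+b`. -/
theorem stmt9 (a b : ℕ) (ha : 0 < a) (hb : 0 < b)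
    (μ : ℕ → ℕ) (hμ : InBox a b μ) :
    hplus a b μ =
      {p : ℕ × ℕ | 1 ≤ p.1 ∧ p.1 < p.2 ∧ p.2 ≤ a + b ∧
        (frontierWord a b μ)[p.1 - 1]? = some false ∧
        (frontierWord a b μ)[p.2 - 1]? = some true ∧
        1 ≤ levelAt a b (frontierWord a b μ) (p.1 - 1) -
              levelAt a b (frontierWord a b μ) (p.2 - 1) ∧
        levelAt a b (frontierWord a b μ) (p.1 - 1) -
              levelAt a b (frontierWord a b μ) (p.2 - 1) ≤ (a : ℤ) + b}.ncard := by

  classical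
  set S1 : Set (ℕ × ℕ) := {c : ℕ × ℕ | c.2 < μ c.1 ∧
    -(a : ℤ) < (a : ℤ) * armZ μ c.1 c.2 - (b : ℤ) * leg μ c.1 c.2 ∧
    (a : ℤ) * armZ μ c.1 c.2 - (b : ℤ) * leg μ c.1 c.2 ≤ (b : ℤ)} with hS1
  -- basic facts about cells
  have hcell : ∀ rc : ℕ × ℕ, rc ∈ S1 → rc.1 < a ∧ rc.2 < μ rc.1 ∧ rc.2 < b := by
    rintro ⟨r, c⟩ hmem
    obtain ⟨hc, -, -⟩ := hmem
    have hr : r < a := by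
      by_contra hra
      have := hμ.2.2 r (by omega)
      simp only at hc
      omega
    have hcb : c < b := by
      have h1 : μ r ≤ μ 0 := hμ.1 0 r (by omega)
      have h2 : μ 0 ≤ b := hμ.2.1
      simp only at hc
      omega
    exact ⟨hr, hc, hcb⟩
  have key : {p : ℕ × ℕ | 1 ≤ p.1 ∧ p.1 < p.2 ∧ p.2 ≤ a + b ∧
        (frontierWord a b μ)[p.1 - 1]? = some false ∧
        (frontierWord a b μ)[p.2 - 1]? = some true ∧
        1 ≤ levelAt a b (frontierWord a b μ) (p.1 - 1) -
              levelAt a b (frontierWord a b μ) (p.2 - 1) ∧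
        levelAt a b (frontierWord a b μ) (p.1 - 1) -
              levelAt a b (frontierWord a b μ) (p.2 - 1) ≤ (a : ℤ) + b} =
      (fun rc : ℕ × ℕ => (ePos a μ rc.2 + 1, μ rc.1 + (a - 1 - rc.1) + 1)) '' S1 := by
    ext ⟨i, j⟩
    simp only [Set.mem_setOf_eq, Set.mem_image, Prod.mk.injEq, Prod.exists]
    constructor
    · rintro ⟨hi1, hij, hjab, hFi, hTj, hl1, hl2⟩
      rw [W_true_iff hμ] at hTj
      obtain ⟨r, hr, hje⟩ := hTj
      rw [W_false_iff hμ] at hFi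
      obtain ⟨hilt, hnex⟩ := hFi
      obtain ⟨c, hcb, hie⟩ := cover hμ hilt hnex
      have hc : c < μ r := by
        by_contra hcr
        have h1 := claim1 hμ hr (show μ r ≤ c by omega)
        omega
      rw [hie, hje] at hl1 hl2
      have hconds := (cond_iff hμ hr hc hcb).mp ⟨hl1, hl2⟩
      refine ⟨r, c, ⟨hc, hconds.1, hconds.2⟩, by omega, by omega⟩
    · rintro ⟨r, c, hmem, rfl, rfl⟩
      obtain ⟨hr0, hc0, hcb0⟩ := hcell (r, c) hmem
      have hr : r < a := hr0
      have hc : c < μ r := hc0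
      have hcb : c < b := hcb0
      obtain ⟨-, hcond10, hcond20⟩ := hmem
      have hcond1 : -(a : ℤ) < (a : ℤ) * armZ μ r c - (b : ℤ) * leg μ r c := hcond10
      have hcond2 : (a : ℤ) * armZ μ r c - (b : ℤ) * leg μ r c ≤ (b : ℤ) := hcond20
      have hi1 : ePos a μ c + 1 - 1 = ePos a μ c := by omega
      have hj1 : μ r + (a - 1 - r) + 1 - 1 = μ r + (a - 1 - r) := by omega
      rw [hi1, hj1]
      have hlev := (cond_iff hμ hr hc hcb).mpr ⟨hcond1, hcond2⟩
      have hiltj := claim2 hμ hr hc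
      have hmr : μ r ≤ b := le_trans (hμ.1 0 r (by omega)) hμ.2.1
      refine ⟨by omega, by omega, by omega, ePos_false hμ hcb, ?_, hlev.1, hlev.2⟩
      rw [W_true_iff hμ]
      exact ⟨r, hr, rfl⟩
  rw [hplus, ← hS1, key]
  rw [Set.ncard_image_of_injOn]
  rintro ⟨r1, c1⟩ hm1 ⟨r2, c2⟩ hm2 heq
  obtain ⟨hr1, hc1, hcb1⟩ := hcell _ hm1
  obtain ⟨hr2, hc2, hcb2⟩ := hcell _ hm2
  simp only [Prod.mk.injEq] at heq
  obtain ⟨he1, he2⟩ := heq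
  have hre : r1 = r2 := nrow_inj hμ hr1 hr2 (by omega)
  have hce : c1 = c2 := by
    by_contra hne
    rcases Nat.lt_or_ge c1 c2 with h | h
    · have := ePos_mono (a := a) (μ := μ) h
      omega
    · have h' : c2 < c1 := by omega
      have := ePos_mono (a := a) (μ := μ) h'
      omega
  rw [hre, hce]
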